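/- Let V be a self-adjoint ℍ-module of real dimension 4k with compatible complex structures I, J, K. In the Clifford algebra Cl(V)⊗ℂ, the elements h = (1/2i)c(ω_I), e = (1/4)(c(ω_J) − i c(ω_K)), f = −(1/4)(c(ω_J) + i c(ω_K)) satisfy the sl₂ relations [h,e] = 2e, [h,f] = −2f, [e,f] = h. -/

import Mathlib

set_option linter.unusedSectionVars false

section Aux
variable {V : Type*} [NormedAddCommGroup V] [InnerProductSpace ℝ V]
  {A : Type*} [Ring A] [Algebra ℝ A]
  {n : ℕ} (e : OrthonormalBasis (Fin n) ℝ V) (c : V →ₗ[ℝ] A)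
  (hcliff : ∀ u v : V, c u * c v + c v * c u
      = algebraMap ℝ A (-2 * (inner ℝ u v : ℝ)))

lemma csum (w : V) : c w = ∑ i, (inner ℝ (e i) w : ℝ) • c (e i) := by
  conv_lhs => rw [← e.sum_repr' w]
  rw [map_sum]
  simp [map_smul]

include hcliff in
lemma term_comm (u w v : V) :
    c u * c w * c v - c v * (c u * c w)
      = (-2 * (inner ℝ w v : ℝ)) • c u + (2 * (inner ℝ u v : ℝ)) • c w := by
  have e1 : c w * c v = algebraMap ℝ A (-2 * (inner ℝ w v : ℝ)) - c v * c w :=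
    eq_sub_of_add_eq (hcliff w v)
  have e2 : c v * c u = algebraMap ℝ A (-2 * (inner ℝ u v : ℝ)) - c u * c v :=
    eq_sub_of_add_eq (by rw [add_comm]; exact hcliff u v)
  have e3 : c u * algebraMap ℝ A (-2 * (inner ℝ w v : ℝ))
      = algebraMap ℝ A (-2 * (inner ℝ w v : ℝ)) * c u := (Algebra.commutes _ _).symm
  calc c u * c w * c v - c v * (c u * c w)
      = c u * (c w * c v) - (c v * c u) * c w := by rw [mul_assoc, mul_assoc]
    _ = (-2 * (inner ℝ w v : ℝ)) • c u + (2 * (inner ℝ u v : ℝ)) • c w := by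
        rw [e1, e2, Algebra.smul_def, Algebra.smul_def, mul_sub, sub_mul, e3,
          map_mul, map_mul]
        push_cast
        noncomm_ring
end Aux

section Aux2
variable {V : Type*} [NormedAddCommGroup V] [InnerProductSpace ℝ V]
  {A : Type*} [Ring A] [Algebra ℝ A]
  {n : ℕ} (e : OrthonormalBasis (Fin n) ℝ V) (c : V →ₗ[ℝ] A)
  (hcliff : ∀ u v : V, c u * c v + c v * c u
      = algebraMap ℝ A (-2 * (inner ℝ u v : ℝ)))

include hcliff in
lemma comm_vec (T : Module.End ℝ V)
    (hskew : ∀ u v : V, (inner ℝ (T u) v : ℝ) = - inner ℝ u (T v)) (v : V) :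
    (∑ i, c (e i) * c (T (e i))) * c v - c v * ∑ i, c (e i) * c (T (e i))
      = (4 : ℝ) • c (T v) := by
  rw [Finset.sum_mul, Finset.mul_sum, ← Finset.sum_sub_distrib]
  have hterm : ∀ i, c (e i) * c (T (e i)) * c v - c v * (c (e i) * c (T (e i)))
      = (2 * (inner ℝ (e i) (T v) : ℝ)) • c (e i)
        + (2 * (inner ℝ (e i) v : ℝ)) • c (T (e i)) := by
    intro i
    rw [term_comm c hcliff (e i) (T (e i)) v, hskew (e i) v]
    ring_nf
  rw [Finset.sum_congr rfl fun i _ => hterm i, Finset.sum_add_distrib]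
  have h1 : ∑ i, (2 * (inner ℝ (e i) (T v) : ℝ)) • c (e i) = (2 : ℝ) • c (T v) := by
    rw [csum e c (T v), Finset.smul_sum]
    exact Finset.sum_congr rfl fun i _ => by rw [smul_smul]
  have h2 : ∑ i, (2 * (inner ℝ (e i) v : ℝ)) • c (T (e i)) = (2 : ℝ) • c (T v) := by
    have : c (T v) = ∑ i, (inner ℝ (e i) v : ℝ) • c (T (e i)) := by
      conv_lhs => rw [← e.sum_repr' v]
      rw [map_sum, map_sum]
      simp [map_smul]
    rw [this, Finset.smul_sum]
    exact Finset.sum_congr rfl fun i _ => by rw [smul_smul]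
  rw [h1, h2, ← add_smul]
  norm_num

include hcliff in
lemma swap_sum (T B : Module.End ℝ V)
    (hskew : ∀ u v : V, (inner ℝ (T u) v : ℝ) = - inner ℝ u (T v)) :
    ∑ i, c (T (e i)) * c (B (e i)) = -∑ j, c (e j) * c ((B * T) (e j)) := by
  have step : ∀ i, c (T (e i)) * c (B (e i))
      = ∑ j, (inner ℝ (e j) (T (e i)) : ℝ) • (c (e j) * c (B (e i))) := by
    intro i
    rw [csum e c (T (e i)), Finset.sum_mul]
    exact Finset.sum_congr rfl fun j _ => by rw [smul_mul_assoc]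
  rw [Finset.sum_congr rfl fun i _ => step i, Finset.sum_comm]
  rw [← Finset.sum_neg_distrib]
  refine Finset.sum_congr rfl fun j _ => ?_
  have key : ∑ i, (inner ℝ (e j) (T (e i)) : ℝ) • (c (e j) * c (B (e i)))
      = c (e j) * c (B (∑ i, (inner ℝ (e j) (T (e i)) : ℝ) • e i)) := by
    rw [map_sum, map_sum, Finset.mul_sum]
    refine Finset.sum_congr rfl fun i _ => ?_
    rw [map_smul, map_smul, mul_smul_comm]
  rw [key]
  have : (∑ i, (inner ℝ (e j) (T (e i)) : ℝ) • e i) = - T (e j) := by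
    have : ∀ i, (inner ℝ (e j) (T (e i)) : ℝ) = -(inner ℝ (e i) (T (e j)) : ℝ) := by
      intro i
      have h1 := hskew (e i) (e j)
      have h2 := real_inner_comm (e j) (T (e i))
      have h3 := real_inner_comm (e i) (T (e j))
      linarith
    rw [Finset.sum_congr rfl fun i _ => by rw [this i, neg_smul]]
    rw [Finset.sum_neg_distrib, e.sum_repr' (T (e j))]
  rw [this]
  simp [Module.End.mul_apply, map_neg, mul_neg]

include hcliff in
lemma bracket_sum (T B : Module.End ℝ V)
    (hskew : ∀ u v : V, (inner ℝ (T u) v : ℝ) = - inner ℝ u (T v)) :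
    (∑ i, c (e i) * c (T (e i))) * (∑ i, c (e i) * c (B (e i)))
      - (∑ i, c (e i) * c (B (e i))) * (∑ i, c (e i) * c (T (e i)))
      = (4 : ℝ) • ((∑ i, c (e i) * c ((T * B) (e i)))
          - ∑ i, c (e i) * c ((B * T) (e i))) := by
  set S := ∑ i, c (e i) * c (T (e i)) with hS
  rw [Finset.mul_sum, Finset.sum_mul, ← Finset.sum_sub_distrib]
  have hterm : ∀ j, S * (c (e j) * c (B (e j))) - c (e j) * c (B (e j)) * S
      = (4 : ℝ) • (c (T (e j)) * c (B (e j)))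
        + (4 : ℝ) • (c (e j) * c ((T * B) (e j))) := by
    intro j
    have h1 : S * c (e j) - c (e j) * S = (4 : ℝ) • c (T (e j)) :=
      comm_vec e c hcliff T hskew (e j)
    have h2 : S * c (B (e j)) - c (B (e j)) * S = (4 : ℝ) • c (T (B (e j))) :=
      comm_vec e c hcliff T hskew (B (e j))
    have expand : S * (c (e j) * c (B (e j))) - c (e j) * c (B (e j)) * S
        = (S * c (e j) - c (e j) * S) * c (B (e j))
          + c (e j) * (S * c (B (e j)) - c (B (e j)) * S) := by noncomm_ring
    rw [expand, h1, h2, smul_mul_assoc, mul_smul_comm]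
    rfl
  rw [Finset.sum_congr rfl fun j _ => hterm j, Finset.sum_add_distrib,
    ← Finset.smul_sum, ← Finset.smul_sum,
    swap_sum e c hcliff T B hskew, smul_sub, smul_neg, neg_add_eq_sub]
end Aux2

set_option maxHeartbeats 1000000

/-- Let `V` be a self-adjoint ℍ-module of real dimension `4k` with
compatible complex structures `I, J, K` (quaternion relations, orthogonal for the
inner product).  In the complexified Clifford algebra (modeled by a ℂ-algebra `A`
with generating map `c` satisfying the Clifford relations), the quantized Kähler
forms `c(ω_C) = ½ Σᵢ c(eᵢ) c(C eᵢ)` yield elements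
`h = (1/2i) c(ω_I)`, `e = ¼ (c(ω_J) - i c(ω_K))`, `f = -¼ (c(ω_J) + i c(ω_K))`
satisfying the sl₂ relations `[h,e] = 2e`, `[h,f] = -2f`, `[e,f] = h`. -/
theorem clifford_sl2_triple
    {V : Type*} [NormedAddCommGroup V] [InnerProductSpace ℝ V]
    {A : Type*} [Ring A] [Algebra ℝ A] [Algebra ℂ A] [IsScalarTower ℝ ℂ A]
    (k : ℕ) (e : OrthonormalBasis (Fin (4 * k)) ℝ V)
    (c : V →ₗ[ℝ] A)
    (hcliff : ∀ u v : V, c u * c v + c v * c u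
      = algebraMap ℝ A (-2 * (inner ℝ u v : ℝ)))
    (I J K : Module.End ℝ V)
    (hI2 : I * I = -1) (hJ2 : J * J = -1) (hK2 : K * K = -1)
    (hIJK : I * J * K = -1)
    (hIiso : ∀ u v : V, (inner ℝ (I u) (I v) : ℝ) = inner ℝ u v)
    (hJiso : ∀ u v : V, (inner ℝ (J u) (J v) : ℝ) = inner ℝ u v)
    (hKiso : ∀ u v : V, (inner ℝ (K u) (K v) : ℝ) = inner ℝ u v)
    (cωI cωJ cωK hEl eEl fEl : A)
    (hcI : cωI = (1 / 2 : ℝ) • ∑ i : Fin (4 * k), c (e i) * c (I (e i)))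
    (hcJ : cωJ = (1 / 2 : ℝ) • ∑ i : Fin (4 * k), c (e i) * c (J (e i)))
    (hcK : cωK = (1 / 2 : ℝ) • ∑ i : Fin (4 * k), c (e i) * c (K (e i)))
    (hh : hEl = (1 / (2 * Complex.I)) • cωI)
    (he : eEl = (1 / 4 : ℂ) • (cωJ - Complex.I • cωK))
    (hf : fEl = -((1 / 4 : ℂ) • (cωJ + Complex.I • cωK))) :
    hEl * eEl - eEl * hEl = (2 : ℂ) • eEl ∧
    hEl * fEl - fEl * hEl = (-2 : ℂ) • fEl ∧
    eEl * fEl - fEl * eEl = hEl := by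
  -- skew-adjointness of I, J, K
  have squareNeg : ∀ T : Module.End ℝ V, T * T = -1 → ∀ v : V, T (T v) = -v := by
    intro T hT v
    have := DFunLike.congr_fun hT v
    simpa [Module.End.mul_apply] using this
  have mkSkew : ∀ T : Module.End ℝ V, T * T = -1 →
      (∀ u v : V, (inner ℝ (T u) (T v) : ℝ) = inner ℝ u v) →
      ∀ u v : V, (inner ℝ (T u) v : ℝ) = - inner ℝ u (T v) := by
    intro T hT hiso u v
    have h := hiso u (T v)
    rw [squareNeg T hT v, inner_neg_right] at h
    linarith
  have hIskew := mkSkew I hI2 hIiso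
  have hJskew := mkSkew J hJ2 hJiso
  have hKskew := mkSkew K hK2 hKiso
  -- quaternion multiplication table
  have hIJ : I * J = K := by
    have h : (I * J * K) * K = (-1) * K := by rw [hIJK]
    rw [mul_assoc, hK2, mul_neg_one, neg_one_mul] at h
    exact neg_injective h
  have hIK : I * K = -J := by
    have h : I * (I * J) = I * K := by rw [hIJ]
    rw [← mul_assoc, hI2, neg_one_mul] at h
    exact h.symm
  have hJK : J * K = I := by
    have h : (I * K) * K = (-J) * K := by rw [hIK]
    rw [mul_assoc, hK2, mul_neg_one, neg_mul] at h
    exact (neg_injective h).symm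
  have hJI : J * I = -K := by
    have h : J * (J * K) = J * I := by rw [hJK]
    rw [← mul_assoc, hJ2, neg_one_mul] at h
    exact h.symm
  have hKJ : K * J = -I := by
    have h : (I * J) * J = K * J := by rw [hIJ]
    rw [mul_assoc, hJ2, mul_neg_one] at h
    exact h.symm
  have hKI : K * I = J := by
    have h : K * (J * K) = K * I := by rw [hJK]
    rw [← mul_assoc, hKJ, neg_mul, hIK, neg_neg] at h
    exact h.symm
  -- the three quantized sums
  set sI : A := ∑ i : Fin (4 * k), c (e i) * c (I (e i)) with hsI
  set sJ : A := ∑ i : Fin (4 * k), c (e i) * c (J (e i)) with hsJ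
  set sK : A := ∑ i : Fin (4 * k), c (e i) * c (K (e i)) with hsK
  have hSneg : ∀ T : Module.End ℝ V,
      (∑ i : Fin (4 * k), c (e i) * c ((-T) (e i)))
        = -∑ i : Fin (4 * k), c (e i) * c (T (e i)) := by
    intro T
    rw [← Finset.sum_neg_distrib]
    exact Finset.sum_congr rfl fun i _ => by simp [mul_neg]
  let c' : @LinearMap ℝ ℝ _ _ (RingHom.id ℝ) V A _ _ _ Algebra.toModule :=
    @LinearMap.mk ℝ ℝ _ _ (RingHom.id ℝ) V A _ _ _ Algebra.toModule ⟨c, c.map_add⟩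
      (fun r v => by
        have h1 : c (r • v) = (r : ℂ) • c v := c.map_smul r v
        show c (r • v) = (RingHom.id ℝ r) • c v
        rw [h1, RingHom.id_apply, ← smul_one_smul ℂ r (c v), Complex.real_smul, mul_one])
  have hc' : ∀ v, c' v = c v := fun _ => rfl
  letI : Module ℝ A := Algebra.toModule
  -- brackets
  have bIJ : sI * sJ - sJ * sI = (8 : ℝ) • sK := by
    have h := bracket_sum e c' hcliff I J hIskew
    simp only [hc'] at h
    rw [hIJ, hJI, hSneg, sub_neg_eq_add, ← hsK] at h
    rw [h, smul_add, ← add_smul]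
    norm_num
  have bIK : sI * sK - sK * sI = ((-8 : ℝ)) • sJ := by
    have h := bracket_sum e c' hcliff I K hIskew
    simp only [hc'] at h
    rw [hIK, hKI, hSneg, ← hsJ] at h
    rw [h, show -sJ - sJ = -(sJ + sJ) from by abel, smul_neg, smul_add,
      ← add_smul, ← neg_smul]
    norm_num
  have bJK : sJ * sK - sK * sJ = (8 : ℝ) • sI := by
    have h := bracket_sum e c' hcliff J K hJskew
    simp only [hc'] at h
    rw [hJK, hKJ, hSneg, sub_neg_eq_add, ← hsI] at h
    rw [h, smul_add, ← add_smul]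
    norm_num
  have bKJ : sK * sJ - sJ * sK = ((-8 : ℝ)) • sI := by
    rw [← neg_sub, bJK, ← neg_smul]
  -- normal forms of h, e, f
  have hE : hEl = (-Complex.I / 4) • sI := by
    have h2I : (1 / (2 * Complex.I) : ℂ) = -Complex.I / 2 := by
      field_simp
      linear_combination Complex.I_mul_I
    rw [hh, hcI, h2I]
    module
  have eE : eEl = (1 / 8 : ℂ) • sJ + (-(Complex.I / 8)) • sK := by
    rw [he, hcJ, hcK]
    module
  have fE : fEl = (-(1 / 8) : ℂ) • sJ + (-(Complex.I / 8)) • sK := by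
    rw [hf, hcJ, hcK]
    module
  -- commutator of scalar multiples
  have comm2 : ∀ (z w : ℂ) (a b : A),
      (z • a) * (w • b) - (w • b) * (z • a) = (z * w) • (a * b - b * a) := by
    intro z w a b
    rw [smul_mul_assoc, smul_mul_assoc, mul_smul_comm, mul_smul_comm,
      smul_smul, smul_smul, mul_comm w z, ← smul_sub]
  have key1 : ∀ z1 w1 w2 : ℂ,
      (z1 • sI) * (w1 • sJ + w2 • sK) - (w1 • sJ + w2 • sK) * (z1 • sI)
        = (z1 * w1) • (sI * sJ - sJ * sI) + (z1 * w2) • (sI * sK - sK * sI) := by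
    intro z1 w1 w2
    rw [mul_add, add_mul, add_sub_add_comm, comm2, comm2]
  have key2 : ∀ u1 u2 w1 w2 : ℂ,
      (u1 • sJ + u2 • sK) * (w1 • sJ + w2 • sK)
        - (w1 • sJ + w2 • sK) * (u1 • sJ + u2 • sK)
        = (u1 * w1) • (sJ * sJ - sJ * sJ) + (u1 * w2) • (sJ * sK - sK * sJ)
          + ((u2 * w1) • (sK * sJ - sJ * sK) + (u2 * w2) • (sK * sK - sK * sK)) := by
    intro u1 u2 w1 w2
    rw [← comm2, ← comm2, ← comm2, ← comm2]
    simp only [mul_add, add_mul]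
    abel
  refine ⟨?_, ?_, ?_⟩
  · -- [h, e] = 2e
    rw [hE, eE, key1, bIJ, bIK]
    match_scalars <;> push_cast <;>
      first
        | ring1
        | linear_combination (-(1/4) : ℂ) * Complex.I_sq
        | linear_combination ((1/4) : ℂ) * Complex.I_sq
        | linear_combination (-(1/8) : ℂ) * Complex.I_sq
        | linear_combination ((1/8) : ℂ) * Complex.I_sq
  · -- [h, f] = -2f
    rw [hE, fE, key1, bIJ, bIK]
    match_scalars <;> push_cast <;>
      first
        | ring1
        | linear_combination (-(1/4) : ℂ) * Complex.I_sq
        | linear_combination ((1/4) : ℂ) * Complex.I_sq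
        | linear_combination (-(1/8) : ℂ) * Complex.I_sq
        | linear_combination ((1/8) : ℂ) * Complex.I_sq
  · -- [e, f] = h
    rw [eE, fE, hE, key2, bJK, bKJ, sub_self, sub_self, smul_zero, smul_zero]
    match_scalars <;> push_cast <;>
      first
        | ring1
        | linear_combination (-(1/4) : ℂ) * Complex.I_sq
        | linear_combination ((1/4) : ℂ) * Complex.I_sq
        | linear_combination (-(1/8) : ℂ) * Complex.I_sq
        | linear_combination ((1/8) : ℂ) * Complex.I_sq
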